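/- Let x* be an equilibrium strategy supported on a connected maximal r-regular induced subgraph G* (r > 0) that is not a complete graph on r+1 vertices. Then x* is fragile: there exists a direction d = x − x* with x ∈ S*, x ≠ x*, such that for all sufficiently small ε > 0, (x*+εd)ᵀA(x*+εd) < x*ᵀAx*. -/

import Mathlib

open Matrix Finset

/-- Theorem 3.4 (connected case): an equilibrium strategy supported on a
connected maximal r-regular subnetwork (r > 0) that is not a minimal
(complete) r-regular network is fragile: some small perturbation strictly
decreases the social contact. -/
theorem stmt_9 (n : ℕ) (A : Matrix (Fin n) (Fin n) ℝ)
    (hsym : A.IsSymm)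
    (h01 : ∀ i j, A i j = 0 ∨ A i j = 1)
    (hdiag : ∀ i, A i i = 1)
    (r : ℕ) (hr : 0 < r) (Vs : Finset (Fin n)) (hne : Vs.Nonempty)
    (hreg : ∀ i ∈ Vs, (Vs.filter (fun j => j ≠ i ∧ A i j = 1)).card = r)
    (hout : ∀ i, i ∉ Vs → r + 1 ≤ (Vs.filter (fun j => A i j = 1)).card)
    (hconn : ∀ i ∈ Vs, ∀ j ∈ Vs,
        Relation.ReflTransGen
          (fun a b => a ∈ Vs ∧ b ∈ Vs ∧ a ≠ b ∧ A a b = 1) i j)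
    (hnotcomplete : ∃ i ∈ Vs, ∃ j ∈ Vs, i ≠ j ∧ A i j = 0)
    (xstar : Fin n → ℝ)
    (hxstar : xstar = fun i => if i ∈ Vs then ((Vs.card : ℝ))⁻¹ else 0)
    (hNash : ∀ x ∈ stdSimplex ℝ (Fin n),
        xstar ⬝ᵥ A.mulVec xstar ≤ x ⬝ᵥ A.mulVec xstar) :
    ∃ x ∈ stdSimplex ℝ (Fin n), x ≠ xstar ∧
      (∀ i ∈ Vs, 0 < x i) ∧ (∀ i, i ∉ Vs → x i = 0) ∧
      ∃ ε₀ > (0 : ℝ), ∀ ε : ℝ, 0 < ε → ε ≤ ε₀ →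
        (xstar + ε • (x - xstar)) ⬝ᵥ A.mulVec (xstar + ε • (x - xstar)) <
          xstar ⬝ᵥ A.mulVec xstar := by
  classical
  have hsym' : ∀ a b, A a b = A b a := by
    intro a b
    have := congrFun (congrFun hsym b) a
    simpa [Matrix.transpose_apply] using this
  -- find the triple i j l
  obtain ⟨i, hi, j, hj, l, hl, hAij, hAil, hAlj, hij, hil, hlj⟩ :
      ∃ i, i ∈ Vs ∧ ∃ j, j ∈ Vs ∧ ∃ l, l ∈ Vs ∧
        A i j = 0 ∧ A i l = 1 ∧ A l j = 1 ∧ i ≠ j ∧ i ≠ l ∧ l ≠ j := by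
    obtain ⟨i, hi, j0, hj0, hne0, hij0⟩ := hnotcomplete
    have key : ∀ c, Relation.ReflTransGen
        (fun a b => a ∈ Vs ∧ b ∈ Vs ∧ a ≠ b ∧ A a b = 1) i c →
        A i c = 1 ∨ ∃ j, j ∈ Vs ∧ ∃ l, l ∈ Vs ∧
          A i j = 0 ∧ A i l = 1 ∧ A l j = 1 ∧ i ≠ j ∧ i ≠ l ∧ l ≠ j := by
      intro c h
      induction h with
      | refl => exact Or.inl (hdiag i)
      | @tail b c hab hbc ih =>
        rcases ih with hib | trip
        · obtain ⟨hbV, hcV, hbc_ne, hAbc⟩ := hbc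
          rcases h01 i c with hic | hic
          · refine Or.inr ⟨c, hcV, b, hbV, hic, hib, hAbc, ?_, ?_, hbc_ne⟩
            · intro h; rw [h, hdiag] at hic; norm_num at hic
            · intro h; rw [h, hAbc] at hic; norm_num at hic
          · exact Or.inl hic
        · exact Or.inr trip
    rcases key j0 (hconn i hi j0 hj0) with h1 | trip
    · rw [hij0] at h1; norm_num at h1
    · obtain ⟨j, hj, l, hl, h⟩ := trip
      exact ⟨i, hi, j, hj, l, hl, h⟩
  have hAji : A j i = 0 := by rw [hsym' j i]; exact hAij
  have hAli : A l i = 1 := by rw [hsym' l i]; exact hAil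
  have hAjl : A j l = 1 := by rw [hsym' j l]; exact hAlj
  set N : ℝ := (Vs.card : ℝ) with hN
  have hNpos : 0 < N := by
    rw [hN]; exact_mod_cast Finset.card_pos.mpr hne
  set δ : ℝ := (4 * N)⁻¹ with hδ
  have hδpos : 0 < δ := by positivity
  -- the direction
  set d : Fin n → ℝ :=
    δ • (Pi.single i (1:ℝ) : Fin n → ℝ) + δ • (Pi.single j (1:ℝ) : Fin n → ℝ)
      - (2 * δ) • (Pi.single l (1:ℝ) : Fin n → ℝ) with hd
  have hd_apply : ∀ k, d k = (if k = i then δ else 0) + (if k = j then δ else 0)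
      - (if k = l then 2 * δ else 0) := by
    intro k
    simp only [hd, Pi.add_apply, Pi.sub_apply, Pi.smul_apply, Pi.single_apply,
      smul_eq_mul, mul_ite, mul_one, mul_zero]
  have hd_out : ∀ k, k ∉ Vs → d k = 0 := by
    intro k hk
    rw [hd_apply]
    rw [if_neg (by rintro rfl; exact hk hi), if_neg (by rintro rfl; exact hk hj),
      if_neg (by rintro rfl; exact hk hl)]
    ring
  -- row sums
  have rowsum : ∀ k ∈ Vs, ∑ m ∈ Vs, A k m = (r : ℝ) + 1 := by
    intro k hk
    have : ∑ m ∈ Vs, A k m = ∑ m ∈ Vs, (if A k m = 1 then (1:ℝ) else 0) := by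
      apply Finset.sum_congr rfl
      intro m _
      rcases h01 k m with h | h <;> simp [h]
    rw [this, Finset.sum_boole]
    have hset : Vs.filter (fun m => A k m = 1)
        = insert k (Vs.filter (fun m => m ≠ k ∧ A k m = 1)) := by
      ext m
      simp only [Finset.mem_filter, Finset.mem_insert]
      constructor
      · rintro ⟨hm, hAm⟩
        by_cases hmk : m = k
        · exact Or.inl hmk
        · exact Or.inr ⟨hm, hmk, hAm⟩
      · rintro (rfl | ⟨hm, _, hAm⟩)
        · exact ⟨hk, hdiag _⟩
        · exact ⟨hm, hAm⟩
    rw [hset, Finset.card_insert_of_notMem (by simp), hreg k hk]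
    push_cast
    ring
  -- mulVec of xstar on Vs
  have hAx : ∀ k ∈ Vs, (A.mulVec xstar) k = ((r : ℝ) + 1) / N := by
    intro k hk
    rw [hxstar]
    simp only [Matrix.mulVec, dotProduct]
    have : ∀ m, A k m * (if m ∈ Vs then (N)⁻¹ else 0)
        = if m ∈ Vs then A k m * N⁻¹ else 0 := by
      intro m; by_cases hm : m ∈ Vs <;> simp [hm]
    simp only [hN, mul_ite, mul_zero]
    rw [Finset.sum_ite_mem, Finset.univ_inter, ← Finset.sum_mul, rowsum k hk]
    ring
  -- d ⬝ᵥ A *ᵥ xstar = 0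
  have hdAx : d ⬝ᵥ A.mulVec xstar = 0 := by
    rw [hd]
    simp only [sub_dotProduct, add_dotProduct, smul_dotProduct,
      single_dotProduct, smul_eq_mul, one_mul]
    rw [hAx i hi, hAx j hj, hAx l hl]
    ring
  -- symmetry of the bilinear form
  have symdot : ∀ u v : Fin n → ℝ, u ⬝ᵥ A.mulVec v = v ⬝ᵥ A.mulVec u := by
    intro u v
    rw [Matrix.dotProduct_mulVec, ← Matrix.mulVec_transpose, hsym.eq,
      dotProduct_comm]
  -- A *ᵥ d
  have hAd : ∀ k, (A.mulVec d) k = δ * A k i + δ * A k j - 2 * δ * A k l := by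
    intro k
    rw [hd]
    simp only [Matrix.mulVec_add, Matrix.mulVec_sub, Matrix.mulVec_smul,
      Matrix.mulVec_single, Pi.add_apply, Pi.sub_apply, Pi.smul_apply,
      smul_eq_mul, mul_one, MulOpposite.op_one, one_smul, Matrix.col_apply]
  -- d ⬝ᵥ A *ᵥ d = -2 δ^2
  have hdAd : d ⬝ᵥ A.mulVec d = -(2 * δ ^ 2) := by
    rw [hd]
    simp only [sub_dotProduct, add_dotProduct, smul_dotProduct,
      single_dotProduct, smul_eq_mul, one_mul]
    rw [hAd i, hAd j, hAd l, hdiag i, hdiag j, hdiag l, hAij, hAji, hAil, hAli,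
      hAjl, hAlj]
    ring
  -- the candidate strategy
  refine ⟨xstar + d, ?_, ?_, ?_, ?_, 1, one_pos, ?_⟩
  · -- in the simplex
    constructor
    · intro k
      by_cases hk : k ∈ Vs
      · have hxk : xstar k = N⁻¹ := by rw [hxstar]; simp [hk, hN]
        have hdk : -(2 * δ) ≤ d k := by
          rw [hd_apply]
          have h1 : (0:ℝ) ≤ (if k = i then δ else 0) := by positivity
          have h2 : (0:ℝ) ≤ (if k = j then δ else 0) := by positivity
          have h3 : (if k = l then 2 * δ else 0) ≤ 2 * δ := by
            split
            · exact le_rfl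
            · positivity
          linarith
        have : (0:ℝ) < N⁻¹ - 2 * δ := by
          rw [hδ]
          rw [mul_inv]
          have : (0:ℝ) < N⁻¹ := by positivity
          linarith [this]
        simp only [Pi.add_apply, hxk]
        linarith
      · have hxk : xstar k = 0 := by rw [hxstar]; simp [hk]
        simp [hxk, hd_out k hk]
    · have hsum : ∑ k, xstar k = 1 := by
        rw [hxstar]
        rw [Finset.sum_ite_mem, Finset.univ_inter, Finset.sum_const, nsmul_eq_mul]
        field_simp [hN]
        exact hN.symm
      have hdsum : ∑ k, d k = 0 := by
        simp only [hd_apply]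
        rw [Finset.sum_sub_distrib, Finset.sum_add_distrib]
        simp only [Finset.sum_ite_eq', Finset.mem_univ, if_true]
        ring
      simp only [Pi.add_apply, Finset.sum_add_distrib, hsum, hdsum, add_zero]
  · -- x ≠ xstar
    intro h
    have h2 := congrFun h i
    simp only [Pi.add_apply, add_eq_left] at h2
    rw [hd_apply i, if_pos rfl, if_neg hij, if_neg hil] at h2
    have hδ0 : δ = 0 := by linarith
    exact absurd hδ0 (ne_of_gt hδpos)
  · -- positivity on Vs
    intro k hk
    have hxk : xstar k = N⁻¹ := by rw [hxstar]; simp [hk, hN]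
    have hdk : -(2 * δ) ≤ d k := by
      rw [hd_apply]
      have h1 : (0:ℝ) ≤ (if k = i then δ else 0) := by positivity
      have h2 : (0:ℝ) ≤ (if k = j then δ else 0) := by positivity
      have h3 : (if k = l then 2 * δ else 0) ≤ 2 * δ := by
        split
        · exact le_rfl
        · positivity
      linarith
    have : (0:ℝ) < N⁻¹ - 2 * δ := by
      rw [hδ, mul_inv]
      have : (0:ℝ) < N⁻¹ := by positivity
      linarith [this]
    simp only [Pi.add_apply, hxk]
    linarith
  · -- zero off Vs
    intro k hk
    have hxk : xstar k = 0 := by rw [hxstar]; simp [hk]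
    simp [hxk, hd_out k hk]
  · -- the inequality
    intro ε hε _
    have hxd : xstar + d - xstar = d := add_sub_cancel_left xstar d
    rw [hxd]
    have hxAd : xstar ⬝ᵥ A.mulVec d = 0 := by rw [symdot, hdAx]
    have expand : (xstar + ε • d) ⬝ᵥ A.mulVec (xstar + ε • d)
        = xstar ⬝ᵥ A.mulVec xstar + ε * (d ⬝ᵥ A.mulVec xstar)
          + ε * (xstar ⬝ᵥ A.mulVec d) + ε ^ 2 * (d ⬝ᵥ A.mulVec d) := by
      simp only [Matrix.mulVec_add, Matrix.mulVec_smul, dotProduct_add,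
        add_dotProduct, smul_dotProduct, dotProduct_smul,
        smul_eq_mul]
      ring
    rw [expand, hdAx, hxAd, hdAd]
    have : 0 < ε ^ 2 * (2 * δ ^ 2) := by positivity
    linarith
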